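/- Let p be a prime, m ≥ 1, and let B be a nonempty collection of k-subsets of PG(1, p^m) with 1 ≤ k ≤ p^m, invariant under the action of PGL(2, p^m). Then the p-rank of the incidence matrix of the incidence structure (PG(1, p^m), B) equals p^m if p divides k, and p^m + 1 otherwise. -/

import Mathlib

open scoped LinearAlgebra.Projectivization
open Projectivization

/-- The action of an invertible matrix on the projective line. -/
noncomputable def pact {F : Type*} [Field F] (g : GL (Fin 2) F) :
    ℙ F (Fin 2 → F) → ℙ F (Fin 2 → F) :=
  Projectivization.map
    (((Matrix.GeneralLinearGroup.toLin g).toLinearEquiv :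
        (Fin 2 → F) ≃ₗ[F] (Fin 2 → F)) : (Fin 2 → F) →ₗ[F] (Fin 2 → F))
    (Matrix.GeneralLinearGroup.toLin g).toLinearEquiv.injective

noncomputable instance (F : Type*) [Field F] : DecidableEq (ℙ F (Fin 2 → F)) :=
  Classical.decEq _

section Aux
variable {F : Type*} [Field F]

theorem mulVec_ne_zero (g : GL (Fin 2) F) (v : Fin 2 → F) (hv : v ≠ 0) :
    (g : Matrix (Fin 2) (Fin 2) F).mulVec v ≠ 0 := by
  intro h
  apply hv
  have h2 : ((g⁻¹ * g : GL (Fin 2) F) : Matrix (Fin 2) (Fin 2) F).mulVec v = 0 := by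
    rw [Units.val_mul, ← Matrix.mulVec_mulVec, h, Matrix.mulVec_zero]
  rw [inv_mul_cancel] at h2
  simpa using h2

theorem pact_mk (g : GL (Fin 2) F) (v : Fin 2 → F) (hv : v ≠ 0) :
    pact g (mk F v hv) = mk F ((g : Matrix (Fin 2) (Fin 2) F).mulVec v)
      (mulVec_ne_zero g v hv) := by
  rw [pact, map_mk]
  congr 1

theorem pact_pact (g h : GL (Fin 2) F) (x : ℙ F (Fin 2 → F)) :
    pact g (pact h x) = pact (g * h) x := by
  induction x using Projectivization.ind with
  | h v hv => simp only [pact_mk, Matrix.mulVec_mulVec, Units.val_mul]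

theorem pact_one (x : ℙ F (Fin 2 → F)) : pact (1 : GL (Fin 2) F) x = x := by
  induction x using Projectivization.ind with
  | h v hv => simp [pact_mk]

theorem pact_inv_pact (g : GL (Fin 2) F) (x : ℙ F (Fin 2 → F)) :
    pact g⁻¹ (pact g x) = x := by rw [pact_pact, inv_mul_cancel, pact_one]

theorem pact_pact_inv (g : GL (Fin 2) F) (x : ℙ F (Fin 2 → F)) :
    pact g (pact g⁻¹ x) = x := by rw [pact_pact, mul_inv_cancel, pact_one]

theorem pact_bijective (g : GL (Fin 2) F) : Function.Bijective (pact g) :=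
  Function.bijective_iff_has_inverse.2 ⟨pact g⁻¹, pact_inv_pact g, pact_pact_inv g⟩

end Aux

section Pts
variable {F : Type*} [Field F]

theorem vinf_ne_zero : (![1, 0] : Fin 2 → F) ≠ 0 := by
  intro h; simpa using congrFun h 0

theorem vaff_ne_zero (x : F) : (![x, 1] : Fin 2 → F) ≠ 0 := by
  intro h; simpa using congrFun h 1

noncomputable def pinf : ℙ F (Fin 2 → F) := mk F ![1, 0] vinf_ne_zero

noncomputable def paff (x : F) : ℙ F (Fin 2 → F) := mk F ![x, 1] (vaff_ne_zero x)

theorem paff_injective : Function.Injective (paff (F := F)) := by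
  intro x y h
  rw [paff, paff, mk_eq_mk_iff] at h
  obtain ⟨a, ha⟩ := h
  have h1 := congrFun ha 1
  have h0 := congrFun ha 0
  simp [Units.smul_def] at h1 h0
  rw [h1] at h0
  simpa using h0.symm

theorem paff_ne_pinf (x : F) : paff x ≠ pinf := by
  intro h
  rw [paff, pinf, mk_eq_mk_iff] at h
  obtain ⟨a, ha⟩ := h
  have h1 := congrFun ha 1
  simp [Units.smul_def] at h1

/-- every point is `pinf` or some `paff x` -/
theorem point_cases (P : ℙ F (Fin 2 → F)) : P = pinf ∨ ∃ x, P = paff x := by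
  induction P using Projectivization.ind with
  | h v hv =>
    by_cases h1 : v 1 = 0
    · left
      have h0 : v 0 ≠ 0 := by
        intro h0; apply hv; funext i; fin_cases i <;> simp [h0, h1]
      rw [pinf, mk_eq_mk_iff]
      refine ⟨Units.mk0 (v 0) h0, ?_⟩
      funext i; fin_cases i <;> simp [Units.smul_def, h1]
    · right
      refine ⟨v 0 / v 1, ?_⟩
      rw [paff, mk_eq_mk_iff]
      refine ⟨Units.mk0 (v 1) h1, ?_⟩
      funext i; fin_cases i <;> simp [Units.smul_def] <;> field_simp
theorem coe_mkOfDetNeZero (A : Matrix (Fin 2) (Fin 2) F) (h : A.det ≠ 0) :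
    ((Matrix.GeneralLinearGroup.mkOfDetNeZero A h : GL (Fin 2) F) :
      Matrix (Fin 2) (Fin 2) F) = A := rfl

noncomputable def optPt : Option F → ℙ F (Fin 2 → F) := fun o => o.elim pinf paff

theorem optPt_bijective : Function.Bijective (optPt (F := F)) := by
  constructor
  · rintro (_ | x) (_ | y) h
    · rfl
    · exact absurd h.symm (paff_ne_pinf y)
    · exact absurd h (paff_ne_pinf x)
    · exact congrArg _ (paff_injective h)
  · intro P
    rcases point_cases P with h | ⟨x, h⟩
    · exact ⟨none, h.symm⟩
    · exact ⟨some x, h.symm⟩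

/-- transitivity: some `g` maps `pinf` to any point -/
theorem exists_pact_pinf (P : ℙ F (Fin 2 → F)) : ∃ g : GL (Fin 2) F, pact g pinf = P := by
  induction P using Projectivization.ind with
  | h v hv =>
    by_cases h1 : v 1 = 0
    · have h0 : v 0 ≠ 0 := by
        intro h0; apply hv; funext i; fin_cases i <;> simp [h0, h1]
      refine ⟨Matrix.GeneralLinearGroup.mkOfDetNeZero !![v 0, 0; v 1, 1]
        (by simp [Matrix.det_fin_two_of, h0]), ?_⟩
      rw [pinf, pact_mk, mk_eq_mk_iff]
      refine ⟨1, ?_⟩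
      funext i
      fin_cases i <;>
        simp [coe_mkOfDetNeZero, Matrix.mulVec, dotProduct, Fin.sum_univ_two, h1]
    · refine ⟨Matrix.GeneralLinearGroup.mkOfDetNeZero !![v 0, 1; v 1, 0]
        (by simp [Matrix.det_fin_two_of, h1]), ?_⟩
      rw [pinf, pact_mk, mk_eq_mk_iff]
      refine ⟨1, ?_⟩
      funext i
      fin_cases i <;>
        simp [coe_mkOfDetNeZero, Matrix.mulVec, dotProduct, Fin.sum_univ_two]

theorem exists_pact_eq (P Q : ℙ F (Fin 2 → F)) : ∃ g : GL (Fin 2) F, pact g P = Q := by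
  obtain ⟨g, hg⟩ := exists_pact_pinf P
  obtain ⟨h, hh⟩ := exists_pact_pinf Q
  exact ⟨h * g⁻¹, by rw [← pact_pact, ← hg, pact_inv_pact, hh]⟩

end Pts

section Tr
variable {F : Type*} [Field F]

noncomputable def tmat (t : F) : GL (Fin 2) F :=
  Matrix.GeneralLinearGroup.mkOfDetNeZero !![1, t; 0, 1]
    (by simp [Matrix.det_fin_two_of])

theorem tmat_mul (s t : F) : tmat s * tmat t = tmat (s + t) := by
  apply Units.ext
  show (!![1, s; 0, 1] : Matrix (Fin 2) (Fin 2) F) * !![1, t; 0, 1] = !![1, s + t; 0, 1]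
  rw [Matrix.mul_fin_two]
  norm_num [add_comm]

theorem tmat_zero : tmat (0 : F) = 1 := by
  apply Units.ext
  show (!![1, 0; 0, 1] : Matrix (Fin 2) (Fin 2) F) = 1
  ext i j
  fin_cases i <;> fin_cases j <;> simp

theorem pact_tmat_pinf (t : F) : pact (tmat t) pinf = pinf := by
  rw [pinf, pact_mk]
  congr 1
  funext i
  fin_cases i <;> simp [coe_mkOfDetNeZero, tmat, Matrix.mulVec, dotProduct,
    Fin.sum_univ_two]

theorem pact_tmat_paff (t x : F) : pact (tmat t) (paff x) = paff (x + t) := by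
  rw [paff, paff, pact_mk]
  congr 1
  funext i
  fin_cases i <;> simp [coe_mkOfDetNeZero, tmat, Matrix.mulVec, dotProduct,
    Fin.sum_univ_two]

end Tr

noncomputable instance ptFintype {F : Type*} [Field F] [Fintype F] :
    Fintype (ℙ F (Fin 2 → F)) :=
  Fintype.ofBijective optPt optPt_bijective

theorem card_pt {F : Type*} [Field F] [Fintype F] :
    Fintype.card (ℙ F (Fin 2 → F)) = Fintype.card F + 1 := by
  rw [← Fintype.card_of_bijective (optPt_bijective (F := F))]
  simp

theorem exists_fixed_nonzero (p m : ℕ) [hfp : Fact p.Prime]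
    {F : Type*} [Field F] [Fintype F] (hF : Fintype.card F = p ^ m)
    (U : Submodule (ZMod p) ((ℙ F (Fin 2 → F)) → ZMod p))
    (hUinv : ∀ f ∈ U, ∀ t : F, (fun x => f (pact (tmat t) x)) ∈ U)
    (hU : U ≠ ⊥) :
    ∃ f ∈ U, f ≠ 0 ∧ ∀ (t : F) (x), f (pact (tmat t) x) = f x := by
  haveI : NeZero p := ⟨hfp.out.ne_zero⟩
  letI : SMul (Multiplicative F) ↥U :=
    ⟨fun t u => ⟨fun x => (u : (ℙ F (Fin 2 → F)) → ZMod p) (pact (tmat t.toAdd) x),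
      hUinv u u.2 t.toAdd⟩⟩
  letI : MulAction (Multiplicative F) ↥U :=
    { one_smul := fun u => by
        apply Subtype.ext
        funext x
        show (u : (ℙ F (Fin 2 → F)) → ZMod p) (pact (tmat (0 : F)) x) = _
        rw [tmat_zero, pact_one]
      mul_smul := fun s t u => by
        apply Subtype.ext
        funext x
        show (u : (ℙ F (Fin 2 → F)) → ZMod p) (pact (tmat (s.toAdd + t.toAdd)) x)
          = (u : (ℙ F (Fin 2 → F)) → ZMod p)
              (pact (tmat t.toAdd) (pact (tmat s.toAdd) x))
        rw [pact_pact, tmat_mul, add_comm] }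
  have hG : IsPGroup p (Multiplicative F) := by
    apply IsPGroup.of_card (n := m)
    rw [Nat.card_congr (Multiplicative.toAdd (α := F)), Nat.card_eq_fintype_card, hF]
  have hzero : (0 : ↥U) ∈ MulAction.fixedPoints (Multiplicative F) ↥U := by
    intro t
    apply Subtype.ext
    funext x
    show ((0 : ↥U) : (ℙ F (Fin 2 → F)) → ZMod p) (pact (tmat t.toAdd) x) = _
    simp
  have hcard : p ∣ Nat.card ↥U := by
    haveI : Nontrivial ↥U := Submodule.nontrivial_iff_ne_bot.2 hU
    haveI : Fintype ↥U := Fintype.ofFinite ↥U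
    rw [Nat.card_eq_fintype_card, Module.card_eq_pow_finrank (K := ZMod p) (V := ↥U), ZMod.card]
    exact dvd_pow_self p Module.finrank_pos.ne'
  obtain ⟨b, hb, hb0⟩ :=
    hG.exists_fixed_point_of_prime_dvd_card_of_fixed_point (↥U) hcard hzero
  refine ⟨b.val, b.2, fun h => hb0 (Subtype.ext (by simp [h])), fun t x => ?_⟩
  · have := hb (Multiplicative.ofAdd t)
    have := congrFun (congrArg Subtype.val this) x
    exact this

section Main

variable {F : Type*} [Field F] [Fintype F]

noncomputable def chiv (p : ℕ) (b : Finset (ℙ F (Fin 2 → F))) :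
    (ℙ F (Fin 2 → F)) → ZMod p :=
  fun x => if x ∈ b then 1 else 0

noncomputable def sigmaL (p : ℕ) :
    ((ℙ F (Fin 2 → F)) → ZMod p) →ₗ[ZMod p] ZMod p where
  toFun f := ∑ x, f x
  map_add' f g := by simp [Finset.sum_add_distrib]
  map_smul' c f := by simp [Finset.mul_sum]

theorem chiv_comp_pact (p : ℕ) (g : GL (Fin 2) F) (b : Finset (ℙ F (Fin 2 → F))) :
    (fun x => chiv p b (pact g x)) = chiv p (b.image (pact g⁻¹)) := by
  funext x
  have h : pact g x ∈ b ↔ x ∈ b.image (pact g⁻¹) := by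
    rw [Finset.mem_image]
    constructor
    · intro h; exact ⟨pact g x, h, pact_inv_pact g x⟩
    · rintro ⟨a, ha, rfl⟩; rwa [pact_pact_inv]
  simp only [chiv]
  exact if_congr h rfl rfl

theorem comp_mem_span (p : ℕ) (B : Set (Finset (ℙ F (Fin 2 → F))))
    (hinv : ∀ b ∈ B, ∀ g : GL (Fin 2) F, b.image (pact g) ∈ B)
    (g : GL (Fin 2) F) (f : (ℙ F (Fin 2 → F)) → ZMod p)
    (hf : f ∈ Submodule.span (ZMod p) (chiv p '' B)) :
    (fun x => f (pact g x)) ∈ Submodule.span (ZMod p) (chiv p '' B) := by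
  induction hf using Submodule.span_induction with
  | mem f hf =>
    obtain ⟨b, hb, rfl⟩ := hf
    rw [chiv_comp_pact]
    exact Submodule.subset_span ⟨_, hinv b hb g⁻¹, rfl⟩
  | zero => exact Submodule.zero_mem _
  | add f1 f2 _ _ h1 h2 => exact Submodule.add_mem _ h1 h2
  | smul c f _ h => exact Submodule.smul_mem _ c h

theorem sigma_comp (p : ℕ) (g : GL (Fin 2) F) (f : (ℙ F (Fin 2 → F)) → ZMod p) :
    sigmaL p (fun x => f (pact g x)) = sigmaL p f :=
  Fintype.sum_bijective (pact g) (pact_bijective g) _ _ (fun _ => rfl)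

theorem sigma_chiv (p : ℕ) (b : Finset (ℙ F (Fin 2 → F))) :
    sigmaL p (chiv p b) = (b.card : ZMod p) := by
  show (∑ x, if x ∈ b then (1 : ZMod p) else 0) = (b.card : ZMod p)
  rw [Finset.sum_ite_mem, Finset.univ_inter, Finset.sum_const, nsmul_eq_mul, mul_one]

theorem sigma_eq_sum_option (p : ℕ) (f : (ℙ F (Fin 2 → F)) → ZMod p) :
    sigmaL p f = f pinf + ∑ x : F, f (paff x) := by
  show (∑ x, f x) = _
  rw [← Fintype.sum_bijective optPt optPt_bijective (fun o => f (optPt o)) f (fun _ => rfl),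
    Fintype.sum_option]
  rfl

theorem S_le_W (p m : ℕ) [hfp : Fact p.Prime] (hm : 1 ≤ m)
    (hF : Fintype.card F = p ^ m)
    (B : Set (Finset (ℙ F (Fin 2 → F))))
    (hinv : ∀ b ∈ B, ∀ g : GL (Fin 2) F, b.image (pact g) ∈ B)
    (hU : ∃ f, f ∈ Submodule.span (ZMod p) (chiv p '' B) ∧ sigmaL p f = 0 ∧ f ≠ 0) :
    LinearMap.ker (sigmaL p) ≤ Submodule.span (ZMod p) (chiv p '' B) := by
  set W := Submodule.span (ZMod p) (chiv p '' B) with hW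
  set U := W ⊓ LinearMap.ker (sigmaL p) with hUdef
  have hUne : U ≠ ⊥ := by
    obtain ⟨f, hf1, hf2, hf3⟩ := hU
    exact Submodule.ne_bot_iff U |>.2
      ⟨f, Submodule.mem_inf.2 ⟨hf1, LinearMap.mem_ker.2 hf2⟩, hf3⟩
  have hUinv : ∀ f ∈ U, ∀ t : F, (fun x => f (pact (tmat t) x)) ∈ U := by
    intro f hf t
    rw [hUdef, Submodule.mem_inf] at hf ⊢
    exact ⟨comp_mem_span p B hinv _ f hf.1,
      LinearMap.mem_ker.2 (by rw [sigma_comp]; exact LinearMap.mem_ker.1 hf.2)⟩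
  obtain ⟨f, hfU, hf0, hfix⟩ := exists_fixed_nonzero p m hF U hUinv hUne
  have hfW : f ∈ W := (Submodule.mem_inf.1 hfU).1
  have hconst : ∀ x : F, f (paff x) = f (paff 0) := by
    intro x
    have := hfix x (paff 0)
    rwa [pact_tmat_paff, zero_add] at this
  have hcard0 : ((Fintype.card F : ZMod p)) = 0 := by
    rw [hF, ZMod.natCast_eq_zero_iff]
    exact dvd_pow_self p (by omega)
  have hpinf : f pinf = 0 := by
    have h1 : sigmaL p f = 0 := LinearMap.mem_ker.1 (Submodule.mem_inf.1 hfU).2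
    rw [sigma_eq_sum_option] at h1
    rw [Finset.sum_congr rfl (fun x _ => hconst x), Finset.sum_const, Finset.card_univ,
      nsmul_eq_mul, hcard0, zero_mul, add_zero] at h1
    exact h1
  have hc : f (paff 0) ≠ 0 := by
    obtain ⟨P, hP⟩ := Function.ne_iff.1 hf0
    rcases point_cases P with h | ⟨x, h⟩
    · subst h; exact absurd hpinf hP
    · subst h; rw [hconst x] at hP; simpa using hP
  set c := f (paff 0) with hcdef
  have heta : (fun x => if x = pinf then (0 : ZMod p) else 1) ∈ W := by
    have hmem : c⁻¹ • f ∈ W := W.smul_mem _ hfW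
    have heq : c⁻¹ • f = fun x => if x = pinf then (0 : ZMod p) else 1 := by
      funext y
      rcases point_cases y with h | ⟨x, h⟩
      · subst h; simp [hpinf]
      · subst h
        rw [if_neg (paff_ne_pinf x)]
        show c⁻¹ * f (paff x) = 1
        rw [hconst x]
        exact inv_mul_cancel₀ hc
    rwa [heq] at hmem
  have hetaP : ∀ P, (fun x => if x = P then (0 : ZMod p) else 1) ∈ W := by
    intro P
    obtain ⟨g, hg⟩ := exists_pact_eq P pinf
    have h2 := comp_mem_span p B hinv g _ heta
    have heq : (fun x => if pact g x = pinf then (0 : ZMod p) else 1)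
        = fun x => if x = P then (0 : ZMod p) else 1 := by
      funext x
      have : pact g x = pinf ↔ x = P := by
        constructor
        · intro h; exact (pact_bijective g).1 (h.trans hg.symm)
        · rintro rfl; exact hg
      exact if_congr this rfl rfl
    rwa [heq] at h2
  intro f hf
  have hsf : (∑ x, f x) = 0 := LinearMap.mem_ker.1 hf
  have hrepr : f = -(∑ P, f P • (fun x => if x = P then (0 : ZMod p) else 1)) := by
    funext x
    rw [Pi.neg_apply, Finset.sum_apply]
    have : ∀ P : ℙ F (Fin 2 → F),
        (f P • fun x => if x = P then (0 : ZMod p) else 1) x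
          = f P - (if x = P then f P else 0) := by
      intro P
      show f P * (if x = P then (0 : ZMod p) else 1) = _
      split <;> ring
    rw [Finset.sum_congr rfl (fun P _ => this P), Finset.sum_sub_distrib,
      Finset.sum_ite_eq Finset.univ x f, if_pos (Finset.mem_univ x), hsf, zero_sub, neg_neg]
  rw [hrepr]
  exact Submodule.neg_mem _ (Submodule.sum_mem _ (fun P _ => Submodule.smul_mem _ _ (hetaP P)))

end Main

/-- The `p`-rank of an incidence structure: the rank over `GF(p)` of the span of the
characteristic vectors of the blocks (i.e. the rows of the incidence matrix). -/
noncomputable def pRank (p : ℕ) {X : Type*} (B : Set (Finset X)) : ℕ :=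
  letI : DecidableEq X := Classical.decEq X
  Module.finrank (ZMod p) ↥(Submodule.span (ZMod p)
    ((fun b : Finset X => fun x : X => if x ∈ b then (1 : ZMod p) else 0) '' B))

theorem stmt_18 (p m k : ℕ) (hp : p.Prime) (hm : 1 ≤ m) (hk1 : 1 ≤ k)
    (hk2 : k ≤ p ^ m) (F : Type*) [Field F] [Fintype F] (hF : Fintype.card F = p ^ m)
    (B : Set (Finset (ℙ F (Fin 2 → F)))) (hne : B.Nonempty)
    (hcard : ∀ b ∈ B, b.card = k)
    (hinv : ∀ b ∈ B, ∀ g : GL (Fin 2) F, b.image (pact g) ∈ B) :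
    pRank p B = if p ∣ k then p ^ m else p ^ m + 1 := by
  haveI : Fact p.Prime := ⟨hp⟩
  haveI : NeZero p := ⟨hp.ne_zero⟩
  have hpr : pRank p B = Module.finrank (ZMod p)
      ↥(Submodule.span (ZMod p) (chiv (F := F) p '' B)) := rfl
  set W := Submodule.span (ZMod p) (chiv (F := F) p '' B) with hWdef
  -- dimension of the full space
  have hdimV : Module.finrank (ZMod p) ((ℙ F (Fin 2 → F)) → ZMod p) = p ^ m + 1 := by
    rw [Module.finrank_pi, card_pt, hF]
  -- sigma is surjective
  have hsurj : Function.Surjective (sigmaL (F := F) p) := by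
    intro z
    refine ⟨fun _ => z, ?_⟩
    show (∑ _x : ℙ F (Fin 2 → F), z) = z
    rw [Finset.sum_const, Finset.card_univ, card_pt, hF, nsmul_eq_mul]
    push_cast
    rw [ZMod.natCast_self, zero_pow (by omega : m ≠ 0), zero_add, one_mul]
  have hdimS : Module.finrank (ZMod p) ↥(LinearMap.ker (sigmaL (F := F) p)) = p ^ m := by
    have h1 := LinearMap.finrank_range_add_finrank_ker (sigmaL (F := F) p)
    rw [LinearMap.range_eq_top.2 hsurj, finrank_top, hdimV] at h1
    have h2 : Module.finrank (ZMod p) (ZMod p) = 1 := Module.finrank_self _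
    omega
  -- basic block data
  obtain ⟨b, hb⟩ := hne
  have hbcard : b.card = k := hcard b hb
  have hbchiW : chiv p b ∈ W := Submodule.subset_span ⟨b, hb, rfl⟩
  by_cases hdvd : p ∣ k
  · -- case p ∣ k : W = ker sigma
    rw [if_pos hdvd]
    have hWS : W = LinearMap.ker (sigmaL (F := F) p) := by
      apply le_antisymm
      · rw [hWdef, Submodule.span_le]
        rintro _ ⟨b', hb', rfl⟩
        refine LinearMap.mem_ker.2 ?_
        rw [sigma_chiv, hcard b' hb']
        exact (ZMod.natCast_eq_zero_iff k p).2 hdvd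
      · apply S_le_W p m hm hF B hinv
        refine ⟨chiv p b, hbchiW, ?_, ?_⟩
        · rw [sigma_chiv, hbcard]
          exact (ZMod.natCast_eq_zero_iff k p).2 hdvd
        · -- chi b is nonzero since b is nonempty
          obtain ⟨x, hx⟩ := Finset.card_pos.1 (by omega : 0 < b.card)
          intro h
          have := congrFun h x
          rw [chiv, if_pos hx] at this
          exact one_ne_zero this
    rw [hpr, hWS, hdimS]
  · -- case ¬ p ∣ k : W = ⊤
    rw [if_neg hdvd]
    have hkz : (k : ZMod p) ≠ 0 := fun h =>
      hdvd ((ZMod.natCast_eq_zero_iff k p).1 h)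
    -- find x ∈ b and y ∉ b
    obtain ⟨x, hx⟩ := Finset.card_pos.1 (by omega : 0 < b.card)
    have hy : ∃ y, y ∉ b := by
      by_contra h
      push_neg at h
      have : (Finset.univ : Finset (ℙ F (Fin 2 → F))) ⊆ b := fun z _ => h z
      have := Finset.card_le_card this
      rw [Finset.card_univ, card_pt, hF, hbcard] at this
      omega
    obtain ⟨y, hy⟩ := hy
    obtain ⟨g, hg⟩ := exists_pact_eq x y
    have hb' : b.image (pact g) ∈ B := hinv b hb g
    -- the nonzero element of W ⊓ ker sigma
    have hdiff : ∃ f, f ∈ W ∧ sigmaL (F := F) p f = 0 ∧ f ≠ 0 := by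
      refine ⟨chiv p (b.image (pact g)) - chiv p b,
        Submodule.sub_mem _ (Submodule.subset_span ⟨_, hb', rfl⟩) hbchiW, ?_, ?_⟩
      · rw [map_sub, sigma_chiv, sigma_chiv, hcard _ hb', hbcard, sub_self]
      · intro h
        have := congrFun h y
        rw [Pi.sub_apply, chiv, chiv, if_pos, if_neg hy, Pi.zero_apply] at this
        · exact one_ne_zero (by linear_combination this)
        · exact Finset.mem_image.2 ⟨x, hx, hg⟩
    have hSW := S_le_W p m hm hF B hinv hdiff
    have hWtop : W = ⊤ := by
      rw [eq_top_iff]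
      intro f _
      have hmem : f - (sigmaL (F := F) p f * (k : ZMod p)⁻¹) • chiv p b
          ∈ LinearMap.ker (sigmaL (F := F) p) := by
        refine LinearMap.mem_ker.2 ?_
        rw [map_sub, map_smul, sigma_chiv, hbcard, smul_eq_mul, mul_assoc,
          inv_mul_cancel₀ hkz, mul_one, sub_self]
      have : f = (f - (sigmaL (F := F) p f * (k : ZMod p)⁻¹) • chiv p b)
          + (sigmaL (F := F) p f * (k : ZMod p)⁻¹) • chiv p b := by ring
      rw [this]
      exact Submodule.add_mem _ (hSW hmem) (Submodule.smul_mem _ _ hbchiW)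
    rw [hpr, hWtop, finrank_top, hdimV]
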